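/- arXiv:2509.19317 — 8 statements merged into one kernel-verified Lean document; each statement's English description precedes it below -/
import Mathlib

section
/- Let 0 < b < 1, x* = 1/(b-1), and x₀ > x*. For each k ∈ ℤ set x_k = b^{-k}(x₀ - x*) + x* and I_k = [b·x_k, b·x_{k+1}). If a real number x belongs to I_k for some k ∈ ℤ, then b(x - 1) belongs to I_{k-1}. -/
/-- For `0 < b < 1`, `x* = 1/(b-1)`, `x₀ > x*`, and `x_k = b^(-k)(x₀ - x*) + x*`
for `k ∈ ℤ`, with `I_k = [b x_k, b x_{k+1})`: if `x ∈ I_k` then `b(x-1) ∈ I_{k-1}`. -/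
theorem stmt_2 (b x₀ : ℝ) (hb0 : 0 < b) (hb1 : b < 1)
    (xs : ℝ) (hxs : xs = 1 / (b - 1)) (hx₀ : x₀ > xs)
    (X : ℤ → ℝ) (hX : ∀ k : ℤ, X k = b ^ (-k) * (x₀ - xs) + xs)
    (I : ℤ → Set ℝ) (hI : ∀ k : ℤ, I k = Set.Ico (b * X k) (b * X (k + 1))) :
    ∀ k : ℤ, ∀ x : ℝ, x ∈ I k → b * (x - 1) ∈ I (k - 1) := by
  intro k x hx
  rw [hI] at hx
  rw [hI]
  obtain ⟨h1, h2⟩ := hx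
  have hbne : b ≠ 0 := hb0.ne'
  have hb1ne : b - 1 ≠ 0 := by linarith
  have hxs1 : b * xs - 1 = xs := by
    rw [hxs]; field_simp; ring
  have key : ∀ m : ℤ, b * X m - 1 = X (m - 1) := by
    intro m
    rw [hX, hX]
    have hz : b ^ (-(m - 1)) = b * b ^ (-m) := by
      rw [show -(m - 1) = 1 + (-m) by ring, zpow_add₀ hbne, zpow_one]
    rw [hz]
    have := hxs1
    ring_nf
    ring_nf at this
    linarith
  constructor
  · have : b * X (k - 1) = b * (b * X k - 1) := by rw [key]
    rw [this]
    nlinarith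
  · have hk : k - 1 + 1 = k := by ring
    rw [hk]
    have : b * X k = b * (b * X (k + 1) - 1) := by
      rw [key]; congr 1; ring
    rw [this]
    nlinarith
end

section
/- Let 0 < b < 1, x* = 1/(b-1), and x₀ > x*. For every function y₀ : ℝ → ℝ there exists a function y : ℝ → ℝ such that y(x+1) = y(bx) for all x > x* and y(x) = y₀(x) for all x in the interval [b·x₀, x₀ + 1); moreover, any two functions satisfying these two conditions agree at every point of the open interval (b/(b-1), ∞). -/
noncomputable def stmtR (b t₁ t : ℝ) : ℝ := Real.log (t / t₁) / Real.log b
noncomputable def stmtG (b t₁ t : ℝ) : ℝ := t * b ^ (-(⌈stmtR b t₁ t⌉ - 1))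

section aux
variable {b t₁ : ℝ}

lemma aux_rpow (hb0 : 0 < b) (hb1 : b < 1) (ht₁ : 0 < t₁) (t : ℝ) (ht : 0 < t) : b ^ (stmtR b t₁ t) = t / t₁ := by
  have hlogbne : Real.log b ≠ 0 := ne_of_lt (Real.log_neg hb0 hb1)
  rw [stmtR, Real.rpow_def_of_pos hb0, mul_comm, div_mul_cancel₀ _ hlogbne,
    Real.exp_log (div_pos ht ht₁)]

lemma aux_gmem (hb0 : 0 < b) (hb1 : b < 1) (ht₁ : 0 < t₁) (t : ℝ) (ht : 0 < t) : stmtG b t₁ t ∈ Set.Ico (b * t₁) t₁ := by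
  have hbne : b ≠ 0 := ne_of_gt hb0
  set n : ℤ := ⌈stmtR b t₁ t⌉ - 1 with hn
  have hn1 : (n : ℝ) < stmtR b t₁ t := by
    have := Int.ceil_lt_add_one (stmtR b t₁ t)
    rw [hn]; push_cast; linarith
  have hn2 : stmtR b t₁ t ≤ (n : ℝ) + 1 := by
    have := Int.le_ceil (stmtR b t₁ t)
    rw [hn]; push_cast; linarith
  have hz : (b : ℝ) ^ (-n) = b ^ ((-n : ℤ) : ℝ) := (Real.rpow_intCast b (-n)).symm
  have hteq : t = t₁ * b ^ (stmtR b t₁ t) := by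
    rw [aux_rpow hb0 hb1 ht₁ t ht]; field_simp
  have hgt : stmtG b t₁ t = t₁ * b ^ (stmtR b t₁ t - (n : ℝ)) := by
    rw [stmtG, ← hn, hz]
    conv_lhs => rw [hteq]
    rw [mul_assoc, ← Real.rpow_add hb0]
    push_cast
    ring_nf
  have hs1 : b ^ (stmtR b t₁ t - (n : ℝ)) < 1 := by
    have := Real.rpow_lt_rpow_of_exponent_gt hb0 hb1 (by linarith : (0:ℝ) < stmtR b t₁ t - n)
    rwa [Real.rpow_zero] at this
  have hs2 : b ≤ b ^ (stmtR b t₁ t - (n : ℝ)) := by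
    have := Real.rpow_le_rpow_of_exponent_ge hb0 hb1.le (by linarith : stmtR b t₁ t - (n:ℝ) ≤ 1)
    rwa [Real.rpow_one] at this
  constructor
  · rw [hgt]; nlinarith [mul_le_mul_of_nonneg_left hs2 ht₁.le]
  · rw [hgt]; nlinarith [mul_lt_mul_of_pos_left hs1 ht₁]

lemma aux_gfix (hb0 : 0 < b) (hb1 : b < 1) (ht₁ : 0 < t₁) (t : ℝ) (h1 : b * t₁ ≤ t) (h2 : t < t₁) : stmtG b t₁ t = t := by
  have hlogb : Real.log b < 0 := Real.log_neg hb0 hb1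
  have ht : 0 < t := lt_of_lt_of_le (by positivity) h1
  have hq1 : b ≤ t / t₁ := (le_div_iff₀ ht₁).2 (by linarith)
  have hq2 : t / t₁ < 1 := (div_lt_one ht₁).2 h2
  have hl1 : Real.log (t / t₁) < 0 := Real.log_neg (div_pos ht ht₁) hq2
  have hl2 : Real.log b ≤ Real.log (t / t₁) := Real.log_le_log hb0 hq1
  have hr1 : 0 < stmtR b t₁ t := div_pos_of_neg_of_neg hl1 hlogb
  have hr2 : stmtR b t₁ t ≤ 1 :=
    div_le_one_iff.2 (Or.inr (Or.inr ⟨hlogb, hl2⟩))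
  have hceil : ⌈stmtR b t₁ t⌉ = 1 := by
    rw [Int.ceil_eq_iff]
    constructor <;> push_cast <;> linarith
  rw [stmtG, hceil]
  norm_num

lemma aux_gb (hb0 : 0 < b) (hb1 : b < 1) (ht₁ : 0 < t₁) (t : ℝ) (ht : 0 < t) : stmtG b t₁ (b * t) = stmtG b t₁ t := by
  have hbne : b ≠ 0 := ne_of_gt hb0
  have hlogbne : Real.log b ≠ 0 := ne_of_lt (Real.log_neg hb0 hb1)
  have hrb : stmtR b t₁ (b * t) = stmtR b t₁ t + 1 := by
    rw [stmtR, stmtR, show b * t / t₁ = b * (t / t₁) by ring,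
      Real.log_mul hbne (ne_of_gt (div_pos ht ht₁))]
    field_simp
    ring
  have hceil : ⌈stmtR b t₁ (b * t)⌉ = ⌈stmtR b t₁ t⌉ + 1 := by
    rw [hrb]; exact Int.ceil_add_one _
  rw [stmtG, stmtG, hceil,
    show -(⌈stmtR b t₁ t⌉ + 1 - 1) = -(⌈stmtR b t₁ t⌉ - 1) + (-1) by ring,
    zpow_add₀ hbne, zpow_neg_one]
  field_simp

end aux

/-- For `0 < b < 1`, `x* = 1/(b-1)`, `x₀ > x*`: for any initial function `y₀`,
there is a solution `y` of `y(x+1) = y(bx)` (for `x > x*`) agreeing with `y₀` on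
`[b x₀, x₀ + 1)`, and any two such solutions agree on `(b/(b-1), ∞)`. -/
theorem stmt_4 (b x₀ : ℝ) (hb0 : 0 < b) (hb1 : b < 1) (hx₀ : x₀ > 1 / (b - 1)) :
    ∀ y₀ : ℝ → ℝ,
      (∃ y : ℝ → ℝ,
        (∀ x : ℝ, x > 1 / (b - 1) → y (x + 1) = y (b * x)) ∧
        (∀ x ∈ Set.Ico (b * x₀) (x₀ + 1), y x = y₀ x)) ∧
      (∀ y z : ℝ → ℝ,
        ((∀ x : ℝ, x > 1 / (b - 1) → y (x + 1) = y (b * x)) ∧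
          (∀ x ∈ Set.Ico (b * x₀) (x₀ + 1), y x = y₀ x)) →
        ((∀ x : ℝ, x > 1 / (b - 1) → z (x + 1) = z (b * x)) ∧
          (∀ x ∈ Set.Ico (b * x₀) (x₀ + 1), z x = y₀ x)) →
        ∀ x ∈ Set.Ioi (b / (b - 1)), y x = z x) := by
  have hbne : b ≠ 0 := ne_of_gt hb0
  have hsub : b - 1 < 0 := by linarith
  have hsubne : b - 1 ≠ 0 := ne_of_lt hsub
  set p : ℝ := b / (b - 1) with hp
  have hpx : 1 / (b - 1) = p - 1 := by rw [hp]; field_simp; ring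
  set t₁ : ℝ := x₀ + 1 - p with ht₁def
  have ht₁ : 0 < t₁ := by rw [ht₁def]; rw [hpx] at hx₀; linarith
  have hbt₁ : p + b * t₁ = b * x₀ := by rw [ht₁def, hp]; field_simp; ring
  have hpt₁ : p + t₁ = x₀ + 1 := by rw [ht₁def]; ring
  have hmaps : ∀ x : ℝ, b * x - p = b * (x + 1 - p) := by
    intro x; rw [hp]; field_simp; ring
  -- iteration lemmas for any solution of the functional equation
  have step : ∀ y : ℝ → ℝ, (∀ x : ℝ, x > 1 / (b - 1) → y (x + 1) = y (b * x)) →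
      ∀ t : ℝ, 0 < t → y (p + t) = y (p + b * t) := by
    intro y hy t ht
    have hx : p + t - 1 > 1 / (b - 1) := by rw [hpx]; linarith
    have e2 : b * (p + t - 1) = p + b * t := by rw [hp]; field_simp; ring
    have := hy (p + t - 1) hx
    rw [show p + t - 1 + 1 = p + t by ring, e2] at this
    exact this
  have natstep : ∀ y : ℝ → ℝ, (∀ x : ℝ, x > 1 / (b - 1) → y (x + 1) = y (b * x)) →
      ∀ (n : ℕ) (t : ℝ), 0 < t → y (p + t) = y (p + b ^ n * t) := by
    intro y hy n
    induction n with
    | zero => intro t ht; norm_num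
    | succ m ih =>
      intro t ht
      have h1 := ih t ht
      have h2 := step y hy (b ^ m * t) (by positivity)
      rw [h1, h2, show b * (b ^ m * t) = b ^ (m + 1) * t by ring]
  have zstep : ∀ y : ℝ → ℝ, (∀ x : ℝ, x > 1 / (b - 1) → y (x + 1) = y (b * x)) →
      ∀ (n : ℤ) (t : ℝ), 0 < t → y (p + t) = y (p + b ^ n * t) := by
    intro y hy n t ht
    cases n with
    | ofNat m =>
      rw [show ((Int.ofNat m : ℤ) : ℤ) = (m : ℤ) from rfl, zpow_natCast]
      exact natstep y hy m t ht
    | negSucc m =>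
      have hb' : (0:ℝ) < b ^ (Int.negSucc m) := zpow_pos hb0 _
      have h1 := natstep y hy (m + 1) (b ^ (Int.negSucc m) * t) (by positivity)
      have h2 : b ^ (m + 1) * (b ^ (Int.negSucc m) * t) = t := by
        rw [Int.negSucc_eq, zpow_neg, ← zpow_natCast b (m + 1)]
        push_cast
        field_simp
      rw [h2] at h1
      exact h1.symm
  -- reduction: any solution with the initial condition is determined
  intro y₀
  have reduce : ∀ y : ℝ → ℝ,
      (∀ x : ℝ, x > 1 / (b - 1) → y (x + 1) = y (b * x)) →
      (∀ x ∈ Set.Ico (b * x₀) (x₀ + 1), y x = y₀ x) →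
      ∀ u : ℝ, u > p → y u = y₀ (p + stmtG b t₁ (u - p)) := by
    intro y hy hinit u hu
    set t := u - p with htdef
    have ht : 0 < t := by rw [htdef]; linarith
    have h1 : y u = y (p + stmtG b t₁ t) := by
      have h := zstep y hy (-(⌈stmtR b t₁ t⌉ - 1)) t ht
      rw [show p + t = u by rw [htdef]; ring] at h
      rw [h, stmtG, mul_comm]
    have hmem : p + stmtG b t₁ t ∈ Set.Ico (b * x₀) (x₀ + 1) := by
      obtain ⟨hm1, hm2⟩ := aux_gmem hb0 hb1 ht₁ t ht
      constructor
      · rw [← hbt₁]; linarith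
      · rw [← hpt₁]; linarith
    rw [h1, hinit _ hmem]
  constructor
  · -- existence
    refine ⟨fun u => y₀ (p + stmtG b t₁ (u - p)), ?_, ?_⟩
    · intro x hx
      have ht : 0 < x + 1 - p := by rw [hpx] at hx; linarith
      simp only []
      rw [show x + 1 - p = x + 1 - p from rfl]
      rw [show b * x - p = b * (x + 1 - p) from hmaps x,
        aux_gb hb0 hb1 ht₁ (x + 1 - p) ht]
    · intro x hx
      obtain ⟨h1, h2⟩ := hx
      have hg : stmtG b t₁ (x - p) = x - p := by
        apply aux_gfix hb0 hb1 ht₁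
        · linarith [hbt₁]
        · linarith [hpt₁]
      simp only [hg]
      ring_nf
  · -- uniqueness
    intro y z hy hz x hx
    have hx' : x > p := hx
    rw [reduce y hy.1 hy.2 x hx', reduce z hz.1 hz.2 x hx']
end

section
/- Let b > 1, x* = 1/(b-1), and x₀ > x*. For every function y₀ : ℝ → ℝ there exists a function y : ℝ → ℝ such that y(x+1) = y(bx) for all x > x* and y(x) = y₀(x) for all x in the interval [x₀ + 1, b·x₀); moreover, any two functions satisfying these two conditions agree at every point of the open interval (b/(b-1), ∞). -/
open Real

/-- For `b > 1`, `x* = 1/(b-1)`, `x₀ > x*`: for any initial function `y₀`,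
there is a solution `y` of `y(x+1) = y(bx)` (for `x > x*`) agreeing with `y₀` on
`[x₀ + 1, b x₀)`, and any two such solutions agree on `(b/(b-1), ∞)`. -/
theorem stmt_5 (b x₀ : ℝ) (hb : b > 1) (hx₀ : x₀ > 1 / (b - 1)) :
    ∀ y₀ : ℝ → ℝ,
      (∃ y : ℝ → ℝ,
        (∀ x : ℝ, x > 1 / (b - 1) → y (x + 1) = y (b * x)) ∧
        (∀ x ∈ Set.Ico (x₀ + 1) (b * x₀), y x = y₀ x)) ∧
      (∀ y z : ℝ → ℝ,
        ((∀ x : ℝ, x > 1 / (b - 1) → y (x + 1) = y (b * x)) ∧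
          (∀ x ∈ Set.Ico (x₀ + 1) (b * x₀), y x = y₀ x)) →
        ((∀ x : ℝ, x > 1 / (b - 1) → z (x + 1) = z (b * x)) ∧
          (∀ x ∈ Set.Ico (x₀ + 1) (b * x₀), z x = y₀ x)) →
        ∀ x ∈ Set.Ioi (b / (b - 1)), y x = z x) := by
  intro y₀
  have hb0 : (0:ℝ) < b := lt_trans one_pos hb
  have hbne : b ≠ 0 := ne_of_gt hb0
  have hbne1 : b ≠ 1 := ne_of_gt hb
  have hb1 : (0:ℝ) < b - 1 := sub_pos.mpr hb
  set p : ℝ := b / (b - 1) with hp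
  set c : ℝ := x₀ - 1 / (b - 1) with hc
  have hcpos : 0 < c := sub_pos.mpr hx₀
  have hps : p = 1 / (b - 1) + 1 := by rw [hp]; field_simp; ring
  have hpb : b * p = p + b := by rw [hp]; field_simp; ring
  have hpc : p + c = x₀ + 1 := by rw [hps, hc]; ring
  have hpbc : p + b * c = b * x₀ := by
    rw [hc, hp]; field_simp; ring
  -- the normalizing map
  set nf : ℝ → ℤ := fun t => -⌊Real.logb b (t / c)⌋ with hnf
  set r : ℝ → ℝ := fun t => b ^ (nf t) * t with hr
  have hrz : ∀ t : ℝ, r t = b ^ ((nf t : ℝ)) * t := by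
    intro t; rw [hr]; simp [Real.rpow_intCast]
  -- membership of r t in [c, b*c)
  have hmem : ∀ t : ℝ, 0 < t → r t ∈ Set.Ico c (b * c) := by
    intro t ht
    have htc : 0 < t / c := div_pos ht hcpos
    have hct : 0 < c / t := div_pos hcpos ht
    constructor
    · have h1 : Real.logb b (c / t) ≤ ((nf t : ℤ) : ℝ) := by
        have : Real.logb b (c / t) = -Real.logb b (t / c) := by
          rw [show c / t = (t / c)⁻¹ by field_simp, Real.logb_inv]
        rw [this, hnf]
        push_cast
        simp only [neg_le_neg_iff]
        exact Int.floor_le _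
      have h2 : c / t ≤ b ^ ((nf t : ℤ) : ℝ) :=
        (Real.logb_le_iff_le_rpow hb hct).mp h1
      rw [hrz]
      calc c = (c / t) * t := by field_simp
        _ ≤ b ^ ((nf t : ℤ) : ℝ) * t := by
            exact mul_le_mul_of_nonneg_right h2 (le_of_lt ht)
    · have hbct : 0 < b * c / t := div_pos (mul_pos hb0 hcpos) ht
      have h1 : ((nf t : ℤ) : ℝ) < Real.logb b (b * c / t) := by
        have heq : Real.logb b (b * c / t) = 1 - Real.logb b (t / c) := by
          rw [show b * c / t = b * (c / t) by ring,
            Real.logb_mul hbne (ne_of_gt hct),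
            show c / t = (t / c)⁻¹ by field_simp, Real.logb_inv,
            Real.logb_self_eq_one hb]
          ring
        rw [heq, hnf]
        push_cast
        have := Int.lt_floor_add_one (Real.logb b (t / c))
        linarith
      have h2 : b ^ ((nf t : ℤ) : ℝ) < b * c / t :=
        (Real.lt_logb_iff_rpow_lt hb hbct).mp h1
      rw [hrz]
      calc b ^ ((nf t : ℤ) : ℝ) * t < (b * c / t) * t :=
            mul_lt_mul_of_pos_right h2 ht
        _ = b * c := by field_simp
  -- invariance under multiplication by b
  have hshift : ∀ t : ℝ, 0 < t → r (b * t) = r t := by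
    intro t ht
    have hnshift : nf (b * t) = nf t - 1 := by
      rw [hnf]
      simp only
      have : Real.logb b (b * t / c) = Real.logb b (t / c) + 1 := by
        rw [show b * t / c = b * (t / c) by ring,
          Real.logb_mul hbne (ne_of_gt (div_pos ht hcpos)),
          Real.logb_self_eq_one hb]
        ring
      rw [this, Int.floor_add_one]
      ring
    rw [hr]
    simp only
    rw [hnshift, zpow_sub_one₀ hbne]
    field_simp
  -- r is identity on [c, b*c)
  have hfix : ∀ t ∈ Set.Ico c (b * c), r t = t := by
    rintro t ⟨h1, h2⟩
    have ht : 0 < t := lt_of_lt_of_le hcpos h1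
    have h0 : ⌊Real.logb b (t / c)⌋ = 0 := by
      rw [Int.floor_eq_zero_iff]
      constructor
      · exact Real.logb_nonneg hb ((one_le_div hcpos).mpr h1)
      · have : t / c < b := by rw [div_lt_iff₀ hcpos]; linarith
        exact (Real.logb_lt_iff_lt_rpow hb (div_pos ht hcpos)).mpr
          (by rwa [Real.rpow_one])
    rw [hr]; simp only [hnf]
    rw [h0]
    norm_num
  -- canonical value lemma for any solution with the initial condition
  have key : ∀ w : ℝ → ℝ,
      (∀ x : ℝ, x > 1 / (b - 1) → w (x + 1) = w (b * x)) →
      (∀ x ∈ Set.Ico (x₀ + 1) (b * x₀), w x = y₀ x) →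
      ∀ x : ℝ, p < x → w x = y₀ (p + r (x - p)) := by
    intro w hfe hinit x hx
    have step : ∀ t : ℝ, 0 < t → w (p + t) = w (p + b * t) := by
      intro t ht
      have hxgt : p + t - 1 > 1 / (b - 1) := by rw [hps]; linarith
      have := hfe (p + t - 1) hxgt
      have e1 : p + t - 1 + 1 = p + t := by ring
      have e2 : b * (p + t - 1) = p + b * t := by
        have : b * (p + t - 1) = b * p + b * t - b := by ring
        rw [this, hpb]; ring
      rwa [e1, e2] at this
    have zstep : ∀ m : ℤ, ∀ t : ℝ, 0 < t → w (p + b ^ m * t) = w (p + t) := by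
      intro m
      induction m using Int.induction_on with
      | zero => intro t ht; norm_num
      | succ m ih =>
        intro t ht
        have e : b ^ ((m : ℤ) + 1) * t = b ^ (m : ℤ) * (b * t) := by
          rw [zpow_add_one₀ hbne]; ring
        rw [e, ih (b * t) (mul_pos hb0 ht), ← step t ht]
      | pred m ih =>
        intro t ht
        have ht' : 0 < b ^ (-(m : ℤ) - 1) * t :=
          mul_pos (zpow_pos hb0 _) ht
        have e : b * (b ^ (-(m : ℤ) - 1) * t) = b ^ (-(m : ℤ)) * t := by
          rw [zpow_sub_one₀ hbne]; field_simp
        have := step (b ^ (-(m : ℤ) - 1) * t) ht'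
        rw [e] at this
        rw [this, ih t ht]
    have ht : 0 < x - p := sub_pos.mpr hx
    have hrt := hmem (x - p) ht
    have e1 : w x = w (p + b ^ (nf (x - p)) * (x - p)) := by
      rw [zstep (nf (x - p)) (x - p) ht]
      congr 1; ring
    have e2 : p + r (x - p) ∈ Set.Ico (x₀ + 1) (b * x₀) := by
      obtain ⟨ha, hb'⟩ := hrt
      constructor
      · rw [← hpc]; linarith
      · rw [← hpbc]; linarith
    rw [e1]
    exact hinit _ e2
  constructor
  · -- existence
    refine ⟨fun u => if p < u then y₀ (p + r (u - p)) else y₀ u, ?_, ?_⟩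
    · intro x hx
      have h1 : p < x + 1 := by rw [hps]; linarith
      have h2 : p < b * x := by
        have e : b * x - p = b * (x - 1 / (b - 1)) := by
          rw [hp]; field_simp
        have := mul_pos hb0 (sub_pos.mpr hx)
        linarith
      simp only [if_pos h1, if_pos h2]
      have ht : 0 < x + 1 - p := by linarith
      have e : b * x - p = b * (x + 1 - p) := by
        have : b * (x + 1 - p) = b * x + b - b * p := by ring
        rw [this, hpb]; ring
      rw [e, hshift _ ht]
    · intro x hx
      obtain ⟨h1, h2⟩ := hx
      have hxp : p < x := by rw [hps]; linarith
      simp only [if_pos hxp]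
      have hmem' : x - p ∈ Set.Ico c (b * c) := by
        constructor
        · have := hpc; linarith
        · have := hpbc; linarith
      rw [hfix _ hmem']
      congr 1; ring
  · -- uniqueness
    rintro y z ⟨hy1, hy2⟩ ⟨hz1, hz2⟩ x hx
    rw [Set.mem_Ioi] at hx
    rw [key y hy1 hy2 x hx, key z hz1 hz2 x hx]
end

section
/- Let -1 < b < 0, x* = 1/(b-1), c = b/(b-1), and let ε > 0. Set I₀ = (c - ε, c - |b|ε] ∪ [c + |b|ε, c + ε). For every function y₀ : ℝ → ℝ there exists a function y : ℝ → ℝ such that y(x+1) = y(bx) for all x ≠ x* and y(x) = y₀(x) for all x ∈ I₀; moreover, any two functions satisfying these two conditions agree at every point of ℝ \ {c}. -/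
lemma unique_n (b ε r : ℝ) (hb0 : -1 < b) (hb1 : b < 0) (hε : 0 < ε) (hr : 0 < r) :
    ∃! n : ℤ, |b| * ε ≤ |b| ^ n * r ∧ |b| ^ n * r < ε := by
  have hB0 : 0 < |b| := abs_pos.mpr (ne_of_lt hb1)
  have hB1 : |b| < 1 := abs_lt.mpr ⟨hb0, lt_trans hb1 one_pos⟩
  have hM : 1 < |b|⁻¹ := (one_lt_inv₀ hB0).mpr hB1
  have hcond : ∀ n : ℤ, (|b| * ε ≤ |b| ^ n * r ∧ |b| ^ n * r < ε) ↔
      (|b|⁻¹ ^ (n - 1) ≤ r / ε ∧ r / ε < |b|⁻¹ ^ n) := by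
    intro n
    have hBn : (0:ℝ) < |b| ^ n := zpow_pos hB0 n
    have hBn1 : (0:ℝ) < |b| ^ (n-1) := zpow_pos hB0 (n-1)
    rw [inv_zpow, inv_zpow, le_div_iff₀ hε, div_lt_iff₀ hε, inv_mul_le_iff₀ hBn1,
      lt_inv_mul_iff₀ hBn]
    have e1 : |b| ^ n * r = |b| * (|b| ^ (n-1) * r) := by
      rw [← mul_assoc, mul_comm (|b|) (|b|^(n-1)), ← zpow_add_one₀ (ne_of_gt hB0)]
      norm_num
    rw [e1, mul_le_mul_iff_right₀ hB0, ← e1]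
  obtain ⟨m, h1, h2⟩ := exists_mem_Ico_zpow (x := r / ε) (y := |b|⁻¹) (by positivity) hM
  refine ⟨m + 1, (hcond (m+1)).mpr ⟨by simpa using h1, h2⟩, ?_⟩
  intro k hk
  rw [hcond k] at hk
  by_contra hne
  rcases lt_or_gt_of_ne hne with h | h
  · have hle : (k:ℤ) ≤ m := by omega
    have h3 := zpow_le_zpow_right₀ (le_of_lt hM) hle
    exact absurd (lt_of_lt_of_le hk.2 (le_trans h3 h1)) (lt_irrefl _)
  · have hle : (m + 1 : ℤ) ≤ k - 1 := by omega
    have h3 := zpow_le_zpow_right₀ (le_of_lt hM) hle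
    exact absurd (lt_of_lt_of_le h2 (le_trans h3 hk.1)) (lt_irrefl _)

lemma invariance (b xs c : ℝ) (hb1 : b < 0) (hxs : xs = 1 / (b - 1)) (hc : c = b / (b - 1))
    (y : ℝ → ℝ) (hy : ∀ x : ℝ, x ≠ xs → y (x + 1) = y (b * x)) :
    ∀ u : ℝ, u ≠ c → ∀ n : ℤ, y (c + b ^ n * (u - c)) = y u := by
  have hbne : b - 1 ≠ 0 := by intro h; nlinarith
  have hb : b ≠ 0 := ne_of_lt hb1
  have hxc : xs + 1 = c := by rw [hxs, hc]; field_simp; ring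
  have step : ∀ w : ℝ, w ≠ c → y w = y (c + b * (w - c)) := by
    intro w hw
    have h1 : w - 1 ≠ xs := by
      intro h
      exact hw (by linarith [hxc, sub_eq_iff_eq_add.mp h])
    have h2 := hy (w - 1) h1
    rw [sub_add_cancel] at h2
    rw [h2]
    congr 1
    rw [hc]; field_simp; ring
  intro u hu n
  have hne : ∀ m : ℤ, c + b ^ m * (u - c) ≠ c := by
    intro m h
    apply hu
    have : b ^ m * (u - c) = 0 := by linarith
    rcases mul_eq_zero.mp this with h' | h'
    · exact absurd h' (zpow_ne_zero m hb)
    · linarith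
  induction n using Int.induction_on with
  | zero => simp
  | succ k ih =>
    rw [← ih]
    have := step (c + b ^ (k:ℤ) * (u - c)) (hne k)
    rw [this]
    congr 1
    rw [add_sub_cancel_left, ← mul_assoc, mul_comm b (b ^ (k:ℤ)), ← zpow_add_one₀ hb]
  | pred k ih =>
    have hst := step (c + b ^ (-(k:ℤ) - 1) * (u - c)) (hne _)
    have e : c + b * (c + b ^ (-(k:ℤ) - 1) * (u - c) - c) = c + b ^ (-(k:ℤ)) * (u - c) := by
      rw [add_sub_cancel_left, ← mul_assoc, mul_comm b (b ^ (-(k:ℤ)-1)), ← zpow_add_one₀ hb]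
      norm_num
    rw [hst, e, ih]

lemma memI_iff (b ε c : ℝ) (hb1 : b < 0) (hε : 0 < ε) (I₀ : Set ℝ)
    (hI₀ : I₀ = Set.Ioc (c - ε) (c - |b| * ε) ∪ Set.Ico (c + |b| * ε) (c + ε)) :
    ∀ x : ℝ, x ∈ I₀ ↔ |b| * ε ≤ |x - c| ∧ |x - c| < ε := by
  have hB0 : 0 < |b| := abs_pos.mpr (ne_of_lt hb1)
  have hBε : 0 < |b| * ε := mul_pos hB0 hε
  intro x
  rw [hI₀]
  simp only [Set.mem_union, Set.mem_Ioc, Set.mem_Ico]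
  constructor
  · rintro (⟨h1, h2⟩ | ⟨h1, h2⟩)
    · rw [abs_of_neg (by linarith : x - c < 0)]
      constructor <;> linarith
    · rw [abs_of_nonneg (by linarith : (0:ℝ) ≤ x - c)]
      constructor <;> linarith
  · rintro ⟨h1, h2⟩
    rcases le_or_gt c x with h | h
    · rw [abs_of_nonneg (by linarith : (0:ℝ) ≤ x - c)] at h1 h2
      right; constructor <;> linarith
    · rw [abs_of_neg (by linarith : x - c < 0)] at h1 h2
      left; constructor <;> linarith

/-- For `-1 < b < 0`, `x* = 1/(b-1)`, `c = b/(b-1)`, `ε > 0`, and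
`I₀ = (c - ε, c - |b|ε] ∪ [c + |b|ε, c + ε)`: for any initial function `y₀` there is a
solution `y` of `y(x+1) = y(bx)` (for all `x ≠ x*`) agreeing with `y₀` on `I₀`, and any
two such solutions agree on `ℝ \ {c}`. -/
theorem stmt_6 (b ε : ℝ) (hb0 : -1 < b) (hb1 : b < 0) (hε : 0 < ε)
    (xs c : ℝ) (hxs : xs = 1 / (b - 1)) (hc : c = b / (b - 1))
    (I₀ : Set ℝ)
    (hI₀ : I₀ = Set.Ioc (c - ε) (c - |b| * ε) ∪ Set.Ico (c + |b| * ε) (c + ε)) :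
    ∀ y₀ : ℝ → ℝ,
      (∃ y : ℝ → ℝ,
        (∀ x : ℝ, x ≠ xs → y (x + 1) = y (b * x)) ∧
        (∀ x ∈ I₀, y x = y₀ x)) ∧
      (∀ y z : ℝ → ℝ,
        ((∀ x : ℝ, x ≠ xs → y (x + 1) = y (b * x)) ∧ (∀ x ∈ I₀, y x = y₀ x)) →
        ((∀ x : ℝ, x ≠ xs → z (x + 1) = z (b * x)) ∧ (∀ x ∈ I₀, z x = y₀ x)) →
        ∀ x : ℝ, x ≠ c → y x = z x) := by
  have hB0 : 0 < |b| := abs_pos.mpr (ne_of_lt hb1)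
  have hb : b ≠ 0 := ne_of_lt hb1
  have hbne : b - 1 ≠ 0 := by intro h; nlinarith
  have hxc : xs + 1 = c := by rw [hxs, hc]; field_simp; ring
  have hmem := memI_iff b ε c hb1 hε I₀ hI₀
  -- membership only off c
  have hmemne : ∀ x ∈ I₀, x ≠ c := by
    intro x hx h
    rw [hmem] at hx
    rw [h, sub_self, abs_zero] at hx
    nlinarith [hx.1, mul_pos hB0 hε]
  have key : ∀ u : ℝ, u ≠ c → ∃! n : ℤ, (c + b ^ n * (u - c)) ∈ I₀ := by
    intro u hu
    have hr : 0 < |u - c| := abs_pos.mpr (sub_ne_zero.mpr hu)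
    have h := unique_n b ε |u - c| hb0 hb1 hε hr
    refine (existsUnique_congr ?_).mpr h
    intro n
    have e : |b ^ n| = |b| ^ n := map_zpow₀ (absHom : ℝ →*₀ ℝ) b n
    rw [hmem, add_sub_cancel_left, abs_mul, e]
  -- the key algebraic identity : b * x = c + b * ((x+1) - c)
  have halg : ∀ x : ℝ, b * x = c + b * ((x + 1) - c) := by
    intro x
    rw [hc]; field_simp; ring
  intro y₀
  constructor
  · refine ⟨fun u => if h : u = c then 0 else y₀ (c + b ^ (key u h).choose * (u - c)), ?_, ?_⟩
    · intro x hx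
      have hu : x + 1 ≠ c := by
        intro h; exact hx (by linarith)
      have hv : b * x ≠ c := by
        intro h
        rw [halg x] at h
        have : b * ((x + 1) - c) = 0 := by linarith
        rcases mul_eq_zero.mp this with h' | h'
        · exact hb h'
        · exact hu (by linarith)
      simp only [dif_neg hu, dif_neg hv]
      obtain ⟨hp1, hq1⟩ := (key (x+1) hu).choose_spec
      obtain ⟨hp2, hq2⟩ := (key (b*x) hv).choose_spec
      have hbx : b * x - c = b * ((x + 1) - c) := by rw [halg x]; ring
      have harg : c + b ^ (key (b*x) hv).choose * (b * x - c)
          = c + b ^ ((key (b*x) hv).choose + 1) * ((x + 1) - c) := by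
        rw [zpow_add_one₀ hb]
        linear_combination (b ^ (key (b*x) hv).choose) * hbx
      have hn : (key (b*x) hv).choose + 1 = (key (x+1) hu).choose := by
        apply hq1
        rw [← harg]; exact hp2
      rw [← hn]
      rw [harg]
    · intro x hx
      have hxne : x ≠ c := hmemne x hx
      simp only [dif_neg hxne]
      have h0 : (0:ℤ) = (key x hxne).choose := by
        apply (key x hxne).choose_spec.2
        simpa using hx
      rw [← h0]
      norm_num
  · rintro y z ⟨hy, hyI⟩ ⟨hz, hzI⟩ x hx
    obtain ⟨hp, -⟩ := (key x hx).choose_spec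
    have h1 := invariance b xs c hb1 hxs hc y hy x hx (key x hx).choose
    have h2 := invariance b xs c hb1 hxs hc z hz x hx (key x hx).choose
    rw [← h1, ← h2, hyI _ hp, hzI _ hp]
end

section
/- Let b < -1, x* = 1/(b-1), c = b/(b-1), and let ε > 0. Set I₀ = (c - |b|ε, c - ε] ∪ [c + ε, c + |b|ε). For every function y₀ : ℝ → ℝ there exists a function y : ℝ → ℝ such that y(x+1) = y(bx) for all x ≠ x* and y(x) = y₀(x) for all x ∈ I₀; moreover, any two functions satisfying these two conditions agree at every point of ℝ \ {c}. -/
/-- For `b < -1`, `x* = 1/(b-1)`, `c = b/(b-1)`, `ε > 0`, and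
`I₀ = (c - |b|ε, c - ε] ∪ [c + ε, c + |b|ε)`: for any initial function `y₀` there is a
solution `y` of `y(x+1) = y(bx)` (for all `x ≠ x*`) agreeing with `y₀` on `I₀`, and any
two such solutions agree on `ℝ \ {c}`. -/
theorem stmt_7 (b ε : ℝ) (hb : b < -1) (hε : 0 < ε)
    (xs c : ℝ) (hxs : xs = 1 / (b - 1)) (hc : c = b / (b - 1))
    (I₀ : Set ℝ)
    (hI₀ : I₀ = Set.Ioc (c - |b| * ε) (c - ε) ∪ Set.Ico (c + ε) (c + |b| * ε)) :
    ∀ y₀ : ℝ → ℝ,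
      (∃ y : ℝ → ℝ,
        (∀ x : ℝ, x ≠ xs → y (x + 1) = y (b * x)) ∧
        (∀ x ∈ I₀, y x = y₀ x)) ∧
      (∀ y z : ℝ → ℝ,
        ((∀ x : ℝ, x ≠ xs → y (x + 1) = y (b * x)) ∧ (∀ x ∈ I₀, y x = y₀ x)) →
        ((∀ x : ℝ, x ≠ xs → z (x + 1) = z (b * x)) ∧ (∀ x ∈ I₀, z x = y₀ x)) →
        ∀ x : ℝ, x ≠ c → y x = z x) := by
  have hb1 : b - 1 ≠ 0 := by linarith
  have hbne : b ≠ 0 := by linarith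
  have habs : |b| = -b := abs_of_neg (by linarith)
  have habs1 : (1 : ℝ) < |b| := by rw [habs]; linarith
  have habs0 : (0 : ℝ) < |b| := by linarith
  have hcxs : c = xs + 1 := by rw [hc, hxs]; field_simp; ring
  have hbxs : b * xs = c := by rw [hc, hxs]; field_simp
  -- the integer "level" of a point
  set N : ℝ → ℤ := fun t => ⌊Real.logb |b| (|t| / ε)⌋ with hN
  -- basic annulus bounds
  have key : ∀ t : ℝ, t ≠ 0 → ε ≤ |t * b ^ (-(N t))| ∧ |t * b ^ (-(N t))| < |b| * ε := by
    intro t ht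
    have ht0 : 0 < |t| := abs_pos.mpr ht
    have hq : 0 < |t| / ε := div_pos ht0 hε
    set L := Real.logb (|b|) (|t| / ε) with hL
    have hrl : |b| ^ L = |t| / ε := Real.rpow_logb habs0 (ne_of_gt habs1) hq
    have h1 : (|b| : ℝ) ^ ((N t : ℝ)) ≤ |t| / ε := by
      rw [← hrl]
      exact (Real.rpow_le_rpow_left_iff habs1).mpr (Int.floor_le L)
    have h2 : |t| / ε < (|b| : ℝ) ^ ((N t : ℝ) + 1) := by
      rw [← hrl]
      apply (Real.rpow_lt_rpow_left_iff habs1).mpr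
      have := Int.lt_floor_add_one L
      push_cast
      push_cast at this
      linarith
    rw [Real.rpow_intCast] at h1
    have h2' : |t| / ε < (|b| : ℝ) ^ (N t + 1 : ℤ) := by
      rw [← Real.rpow_intCast]
      push_cast
      exact h2
    have habspow : |b ^ (-(N t))| = |b| ^ (-(N t)) := map_zpow₀ (absHom : ℝ →*₀ ℝ) b _
    have habsmul : |t * b ^ (-(N t))| = |t| * |b| ^ (-(N t)) := by
      rw [abs_mul, habspow]
    have hzpos : (0:ℝ) < |b| ^ (N t) := zpow_pos habs0 _
    have hzpos1 : (0:ℝ) < |b| ^ (N t + 1) := zpow_pos habs0 _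
    have h1' : |b| ^ (N t) * ε ≤ |t| := (le_div_iff₀ hε).mp h1
    have h2'' : |t| < |b| ^ (N t) * |b| * ε := by
      have := (div_lt_iff₀ hε).mp h2'
      rw [zpow_add_one₀ (ne_of_gt habs0)] at this
      linarith
    constructor
    · rw [habsmul, zpow_neg, ← div_eq_mul_inv, le_div_iff₀ hzpos]
      linarith
    · rw [habsmul, zpow_neg, ← div_eq_mul_inv, div_lt_iff₀ hzpos]
      nlinarith
  -- N (b * t) = N t + 1
  have hNstep : ∀ t : ℝ, t ≠ 0 → N (b * t) = N t + 1 := by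
    intro t ht
    have ht0 : (|t| : ℝ) ≠ 0 := abs_ne_zero.mpr ht
    have : |b * t| / ε = |b| * (|t| / ε) := by
      rw [abs_mul]; ring
    simp only [hN, this]
    rw [Real.logb_mul (ne_of_gt habs0) (by positivity),
      Real.logb_self_eq_one habs1, add_comm (1:ℝ), Int.floor_add_one, ]
  -- transported point coincidence
  have hGstep : ∀ t : ℝ, t ≠ 0 → (b * t) * b ^ (-(N (b * t))) = t * b ^ (-(N t)) := by
    intro t ht
    rw [hNstep t ht, neg_add, zpow_add₀ hbne, zpow_neg_one]
    field_simp
  -- single functional-equation step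
  have step : ∀ (y : ℝ → ℝ), (∀ x : ℝ, x ≠ xs → y (x + 1) = y (b * x)) →
      ∀ s : ℝ, s ≠ 0 → y (c + s) = y (c + b * s) := by
    intro y hy s hs
    have := hy (xs + s) (by intro h; apply hs; linarith)
    have e1 : xs + s + 1 = c + s := by rw [hcxs]; ring
    have e2 : b * (xs + s) = c + b * s := by rw [mul_add, hbxs]
    rw [e1, e2] at this
    exact this
  -- iterated step
  have iter : ∀ (y : ℝ → ℝ), (∀ x : ℝ, x ≠ xs → y (x + 1) = y (b * x)) →
      ∀ (n : ℤ) (s : ℝ), s ≠ 0 → y (c + b ^ n * s) = y (c + s) := by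
    intro y hy n
    induction n using Int.induction_on with
    | zero => intro s hs; norm_num
    | succ k ih =>
      intro s hs
      have h1 : (b:ℝ) ^ ((k:ℤ) + 1) * s = b * (b ^ (k:ℤ) * s) := by
        rw [zpow_add_one₀ hbne]; ring
      rw [h1, ← step y hy _ (by
        intro h; apply hs
        rcases mul_eq_zero.mp h with h' | h'
        · exact absurd h' (zpow_ne_zero _ hbne)
        · exact h')]
      exact ih s hs
    | pred k ih =>
      intro s hs
      have hbz : (b:ℝ) ^ (-(k:ℤ) - 1) * s ≠ 0 :=
        mul_ne_zero (zpow_ne_zero _ hbne) hs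
      have h1 : (b:ℝ) ^ (-(k:ℤ)) * s = b * (b ^ (-(k:ℤ) - 1) * s) := by
        rw [show -(k:ℤ) = (-(k:ℤ) - 1) + 1 by ring, zpow_add_one₀ hbne]; ring
      have := step y hy _ hbz
      rw [← h1] at this
      rw [this]
      exact ih s hs
  -- membership of annulus points in I₀
  have hmem : ∀ s : ℝ, ε ≤ |s| → |s| < |b| * ε → c + s ∈ I₀ := by
    intro s h1 h2
    rw [hI₀]
    rcases le_or_gt 0 s with h | h
    · right
      rw [abs_of_nonneg h] at h1 h2
      exact ⟨by linarith, by linarith⟩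
    · left
      rw [abs_of_neg h] at h1 h2
      exact ⟨by linarith, by linarith⟩
  intro y₀
  constructor
  · -- existence
    refine ⟨fun x => y₀ (c + (x - c) * b ^ (-(N (x - c)))), ?_, ?_⟩
    · intro x hx
      have ht : x - xs ≠ 0 := sub_ne_zero.mpr hx
      have e1 : x + 1 - c = x - xs := by rw [hcxs]; ring
      have e2 : b * x - c = b * (x - xs) := by rw [mul_sub, hbxs]
      show y₀ (c + (x + 1 - c) * b ^ (-(N (x + 1 - c))))
          = y₀ (c + (b * x - c) * b ^ (-(N (b * x - c))))
      rw [e1, e2, hGstep _ ht]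
    · intro x hxI
      have hann : ε ≤ |x - c| ∧ |x - c| < |b| * ε := by
        rw [hI₀] at hxI
        rcases hxI with ⟨h1, h2⟩ | ⟨h1, h2⟩
        · rw [abs_of_neg (by linarith)]; constructor <;> linarith
        · rw [abs_of_nonneg (by linarith)]; constructor <;> linarith
      have hNz : N (x - c) = 0 := by
        simp only [hN]
        rw [Int.floor_eq_zero_iff]
        constructor
        · exact Real.logb_nonneg habs1 ((one_le_div hε).mpr hann.1)
        · have : |x - c| / ε < |b| := by rw [div_lt_iff₀ hε]; nlinarith
          calc Real.logb |b| (|x - c| / ε) < Real.logb |b| |b| :=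
                Real.logb_lt_logb habs1 (div_pos (by linarith) hε) this
            _ = 1 := Real.logb_self_eq_one habs1
      show y₀ (c + (x - c) * b ^ (-(N (x - c)))) = y₀ x
      rw [hNz]
      norm_num
  · -- uniqueness
    intro y z ⟨hy1, hy2⟩ ⟨hz1, hz2⟩ x hx
    have ht : x - c ≠ 0 := sub_ne_zero.mpr hx
    set t := x - c with hts
    set s := t * b ^ (-(N t)) with hss
    have hs0 : s ≠ 0 := mul_ne_zero ht (zpow_ne_zero _ hbne)
    have hts' : t = b ^ (N t) * s := by
      rw [hss, zpow_neg]
      field_simp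
    have hmemI : c + s ∈ I₀ := by
      obtain ⟨h1, h2⟩ := key t ht
      exact hmem s h1 h2
    have hxeq : x = c + t := by rw [hts]; ring
    calc y x = y (c + b ^ (N t) * s) := by rw [hxeq, ← hts']
      _ = y (c + s) := iter y hy1 _ s hs0
      _ = y₀ (c + s) := hy2 _ hmemI
      _ = z (c + s) := (hz2 _ hmemI).symm
      _ = z (c + b ^ (N t) * s) := (iter z hz1 _ s hs0).symm
      _ = z x := by rw [hxeq, ← hts']
end

section
/- Let ε > 0 and δ > 0. For every function f : ℝ → ℝ there exists a function y : ℝ → ℝ such that y(x) = y(2x) for all x ≠ 0 and y(x) = f(x) for all x in the set I₀ = (-2δ, -δ] ∪ [ε, 2ε); moreover, any two functions satisfying these two conditions agree at every point of ℝ \ {0}. -/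
lemma key_unique13 {c x : ℝ} (hx : 0 < x) {m k : ℤ}
    (hm : (2:ℝ)^m * x ∈ Set.Ico c (2*c)) (hk : (2:ℝ)^k * x ∈ Set.Ico c (2*c)) : m = k := by
  have main : ∀ m k : ℤ, m < k → (2:ℝ)^m * x ∈ Set.Ico c (2*c) →
      (2:ℝ)^k * x ∈ Set.Ico c (2*c) → False := by
    intro m k hlt ⟨hm1, hm2⟩ ⟨hk1, hk2⟩
    have h1 : (2:ℝ)^(1:ℤ) ≤ (2:ℝ)^(k-m) := zpow_le_zpow_right₀ one_le_two (by omega)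
    have h2 : (2:ℝ)^k * x = (2:ℝ)^(k-m) * ((2:ℝ)^m * x) := by
      rw [← mul_assoc, ← zpow_add₀ (two_ne_zero)]; ring_nf
    have hpos : (0:ℝ) < (2:ℝ)^m * x := by positivity
    have : 2 * c ≤ (2:ℝ)^k * x := by
      rw [h2]
      calc 2 * c ≤ 2 * ((2:ℝ)^m * x) := by linarith
        _ ≤ (2:ℝ)^(k-m) * ((2:ℝ)^m * x) := by
            apply mul_le_mul_of_nonneg_right _ hpos.le
            simpa using h1
    linarith
  rcases lt_trichotomy m k with h | h | h
  · exact absurd (main m k h hm hk) (not_false)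
  · exact h
  · exact absurd (main k m h hk hm) (not_false)

lemma key13 {c : ℝ} (hc : 0 < c) {x : ℝ} (hx : 0 < x) :
    ∃ n : ℤ, (2:ℝ)^n * x ∈ Set.Ico c (2*c) := by
  obtain ⟨n, hn1, hn2⟩ := exists_mem_Ico_zpow (x := x / c) (y := 2) (by positivity) one_lt_two
  refine ⟨-n, ?_, ?_⟩
  · rw [le_div_iff₀ hc] at hn1
    have : (2:ℝ)^(-n) * ((2:ℝ)^n * c) ≤ (2:ℝ)^(-n) * x := by
      apply mul_le_mul_of_nonneg_left (by linarith) (by positivity)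
    calc c = (2:ℝ)^(-n) * ((2:ℝ)^n * c) := by
            rw [← mul_assoc, ← zpow_add₀ two_ne_zero]; simp
      _ ≤ _ := this
  · rw [div_lt_iff₀ hc] at hn2
    have : (2:ℝ)^(-n) * x < (2:ℝ)^(-n) * ((2:ℝ)^(n+1) * c) := by
      apply mul_lt_mul_of_pos_left (by linarith) (by positivity)
    calc (2:ℝ)^(-n) * x < (2:ℝ)^(-n) * ((2:ℝ)^(n+1) * c) := this
      _ = 2 * c := by rw [← mul_assoc, ← zpow_add₀ two_ne_zero]; norm_num

lemma iter13 {y : ℝ → ℝ} (hy : ∀ x : ℝ, x ≠ 0 → y x = y (2 * x)) :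
    ∀ n : ℤ, ∀ x : ℝ, x ≠ 0 → y ((2:ℝ)^n * x) = y x := by
  intro n
  induction n using Int.induction_on with
  | zero => intro x hx; simp
  | succ n ih =>
      intro x hx
      have h1 : (2:ℝ)^((n:ℤ)+1) * x = 2 * ((2:ℝ)^(n:ℤ) * x) := by
        rw [zpow_add_one₀ (two_ne_zero (α := ℝ))]; ring
      have h2 : ((2:ℝ)^(n:ℤ) * x) ≠ 0 := mul_ne_zero (by positivity) hx
      rw [h1, ← hy _ h2, ih x hx]
  | pred n ih =>
      intro x hx
      have h2 : ((2:ℝ)^(-(n:ℤ)-1) * x) ≠ 0 := mul_ne_zero (by positivity) hx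
      have h1 : 2 * ((2:ℝ)^(-(n:ℤ)-1) * x) = (2:ℝ)^(-(n:ℤ)) * x := by
        rw [show (-(n:ℤ)) = (-(n:ℤ)-1)+1 by ring, zpow_add_one₀ (two_ne_zero (α := ℝ))]; ring
      rw [hy _ h2, h1, ih x hx]

/-- For `ε, δ > 0`, `I₀ = (-2δ, -δ] ∪ [ε, 2ε)`, and any initial function `f`,
there is a solution `y` of `y(x) = y(2x)` (for all `x ≠ 0`) agreeing with `f` on `I₀`,
and any two such solutions agree on `ℝ \ {0}`. -/
theorem stmt_13 (ε δ : ℝ) (hε : 0 < ε) (hδ : 0 < δ) :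
    ∀ f : ℝ → ℝ,
      (∃ y : ℝ → ℝ,
        (∀ x : ℝ, x ≠ 0 → y x = y (2 * x)) ∧
        (∀ x ∈ Set.Ioc (-2 * δ) (-δ) ∪ Set.Ico ε (2 * ε), y x = f x)) ∧
      (∀ y z : ℝ → ℝ,
        ((∀ x : ℝ, x ≠ 0 → y x = y (2 * x)) ∧
          (∀ x ∈ Set.Ioc (-2 * δ) (-δ) ∪ Set.Ico ε (2 * ε), y x = f x)) →
        ((∀ x : ℝ, x ≠ 0 → z x = z (2 * x)) ∧
          (∀ x ∈ Set.Ioc (-2 * δ) (-δ) ∪ Set.Ico ε (2 * ε), z x = f x)) →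
        ∀ x : ℝ, x ≠ 0 → y x = z x) := by
  intro f
  constructor
  · classical
    refine ⟨fun x => if hx : 0 < x then f ((2:ℝ)^(Classical.choose (key13 hε hx)) * x)
      else if hx' : x < 0 then
        f ((2:ℝ)^(Classical.choose (key13 hδ (neg_pos.2 hx'))) * x) else 0, ?_, ?_⟩
    · intro x hx0
      rcases lt_trichotomy x 0 with hneg | hzero | hpos
      · have h2x : 2 * x < 0 := by linarith
        have hnx : ¬ (0 < x) := by linarith
        have hn2x : ¬ (0 < 2 * x) := by linarith
        simp only [dif_neg hnx, dif_pos hneg, dif_neg hn2x, dif_pos h2x]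
        have hns := Classical.choose_spec (key13 hδ (neg_pos.2 hneg))
        have hms := Classical.choose_spec (key13 hδ (neg_pos.2 h2x))
        set n := Classical.choose (key13 hδ (neg_pos.2 hneg)) with hn
        set m := Classical.choose (key13 hδ (neg_pos.2 h2x)) with hm
        have hkey : (2:ℝ)^(m+1) * (-x) ∈ Set.Ico δ (2*δ) := by
          have e : (2:ℝ)^(m+1) * (-x) = (2:ℝ)^m * (-(2*x)) := by
            rw [zpow_add_one₀ (two_ne_zero (α := ℝ))]; ring
          rw [e]; exact hms
        have heq : m + 1 = n := key_unique13 (neg_pos.2 hneg) hkey hns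
        have e2 : (2:ℝ)^m * (2*x) = (2:ℝ)^n * x := by
          rw [← heq, zpow_add_one₀ (two_ne_zero (α := ℝ))]; ring
        rw [e2]
      · exact absurd hzero hx0
      · have h2x : 0 < 2 * x := by linarith
        simp only [dif_pos hpos, dif_pos h2x]
        have hns := Classical.choose_spec (key13 hε hpos)
        have hms := Classical.choose_spec (key13 hε h2x)
        set n := Classical.choose (key13 hε hpos) with hn
        set m := Classical.choose (key13 hε h2x) with hm
        have hkey : (2:ℝ)^(m+1) * x ∈ Set.Ico ε (2*ε) := by
          have e : (2:ℝ)^(m+1) * x = (2:ℝ)^m * (2*x) := by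
            rw [zpow_add_one₀ (two_ne_zero (α := ℝ))]; ring
          rw [e]; exact hms
        have heq : m + 1 = n := key_unique13 hpos hkey hns
        have e2 : (2:ℝ)^m * (2*x) = (2:ℝ)^n * x := by
          rw [← heq, zpow_add_one₀ (two_ne_zero (α := ℝ))]; ring
        rw [e2]
    · intro x hx
      rcases hx with h | h
      · have hneg : x < 0 := lt_of_le_of_lt h.2 (by linarith)
        have hnx : ¬ (0 < x) := by linarith
        simp only [dif_neg hnx, dif_pos hneg]
        have hns := Classical.choose_spec (key13 hδ (neg_pos.2 hneg))
        set n := Classical.choose (key13 hδ (neg_pos.2 hneg)) with hn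
        have h0 : (2:ℝ)^(0:ℤ) * (-x) ∈ Set.Ico δ (2*δ) := by
          simp only [zpow_zero, one_mul]
          exact ⟨by linarith [h.2], by linarith [h.1]⟩
        have heq : (0:ℤ) = n := key_unique13 (neg_pos.2 hneg) h0 hns
        rw [← heq]; norm_num
      · have hpos : 0 < x := lt_of_lt_of_le hε h.1
        simp only [dif_pos hpos]
        have hns := Classical.choose_spec (key13 hε hpos)
        set n := Classical.choose (key13 hε hpos) with hn
        have h0 : (2:ℝ)^(0:ℤ) * x ∈ Set.Ico ε (2*ε) := by
          simp only [zpow_zero, one_mul]; exact h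
        have heq : (0:ℤ) = n := key_unique13 hpos h0 hns
        rw [← heq]; norm_num
  · rintro y z ⟨hy1, hy2⟩ ⟨hz1, hz2⟩ x hx0
    rcases lt_or_gt_of_ne hx0 with hneg | hpos
    · obtain ⟨n, hn1, hn2⟩ := key13 hδ (neg_pos.2 hneg)
      have e : (2:ℝ)^n * (-x) = -((2:ℝ)^n * x) := by ring
      rw [e] at hn1 hn2
      have hmem : (2:ℝ)^n * x ∈ Set.Ioc (-2*δ) (-δ) ∪ Set.Ico ε (2*ε) :=
        Or.inl ⟨by linarith, by linarith⟩
      rw [← iter13 hy1 n x hx0, ← iter13 hz1 n x hx0, hy2 _ hmem, hz2 _ hmem]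
    · obtain ⟨n, hn⟩ := key13 hε hpos
      have hmem : (2:ℝ)^n * x ∈ Set.Ioc (-2*δ) (-δ) ∪ Set.Ico ε (2*ε) := Or.inr hn
      rw [← iter13 hy1 n x hx0, ← iter13 hz1 n x hx0, hy2 _ hmem, hz2 _ hmem]
end

section
/- Let ε > 0. For every function y₀ : ℝ → ℝ there exists a function y : ℝ → ℝ such that y(3x) = y(x) + y(2x) for all x ≥ 0 and y(x) = y₀(x) for all x in the interval [ε, 3ε); moreover, any two functions satisfying these two conditions agree at every point of the half-line [0, ∞). -/
open Classical

lemma ex1 {ε x : ℝ} (hx : 0 < x) : ∃ n : ℕ, ε < 2 ^ n * x := by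
  obtain ⟨n, hn⟩ := pow_unbounded_of_one_lt (ε / x) (by norm_num : (1:ℝ) < 2)
  exact ⟨n, by rwa [div_lt_iff₀ hx] at hn⟩

lemma ex2 {ε x : ℝ} (hε : 0 < ε) : ∃ n : ℕ, x < (3/2) ^ n * (3 * ε) := by
  obtain ⟨n, hn⟩ := pow_unbounded_of_one_lt (x / (3 * ε)) (by norm_num : (1:ℝ) < 3/2)
  exact ⟨n, by rwa [div_lt_iff₀ (by linarith)] at hn⟩

noncomputable def mu (ε x : ℝ) : ℕ :=
  if h1 : 0 < x ∧ x < ε then Nat.find (ex1 (ε := ε) h1.1)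
  else if h2 : 0 < ε ∧ 3 * ε ≤ x then Nat.find (ex2 (x := x) h2.1)
  else 0

lemma mu_small {ε x : ℝ} (h1 : 0 < x ∧ x < ε) :
    mu ε x = Nat.find (ex1 (ε := ε) h1.1) := by rw [mu, dif_pos h1]

lemma mu_big {ε x : ℝ} (hε : 0 < ε) (hx : 3 * ε ≤ x) :
    mu ε x = Nat.find (ex2 (x := x) hε) := by
  have h1 : ¬(0 < x ∧ x < ε) := by rintro ⟨_, h⟩; linarith
  rw [mu, dif_neg h1, dif_pos ⟨hε, hx⟩]

lemma mu_zero {ε x : ℝ} (h1 : ¬(0 < x ∧ x < ε)) (h2 : ¬ 3 * ε ≤ x) : mu ε x = 0 := by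
  rw [mu, dif_neg h1, dif_neg (by tauto)]

lemma mu_lt_of_small {ε x c : ℝ} (hε : 0 < ε) (hx : 0 < x) (hxe : x < ε)
    (hc : 2 ≤ c) (hc3 : c ≤ 3) : mu ε (c * x) < mu ε x := by
  rw [mu_small ⟨hx, hxe⟩]
  set k := Nat.find (ex1 (ε := ε) hx) with hkdef
  have spec : ε < 2 ^ k * x := Nat.find_spec (ex1 (ε := ε) hx)
  have hk1 : 1 ≤ k := by
    rcases Nat.eq_zero_or_pos k with h | h
    · rw [h] at spec; simp at spec; linarith
    · exact h
  have hcx : 0 < c * x := by nlinarith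
  by_cases hc' : c * x < ε
  · rw [mu_small ⟨hcx, hc'⟩]
    have hpow : (2:ℝ) ^ k = 2 ^ (k - 1) * 2 := by
      rw [← pow_succ, Nat.sub_add_cancel hk1]
    have hpos : (0:ℝ) < 2 ^ (k - 1) := by positivity
    have hfind : Nat.find (ex1 (ε := ε) hcx) ≤ k - 1 := by
      apply Nat.find_le
      nlinarith [spec]
    omega
  · rw [mu_zero (by tauto) (by nlinarith)]
    omega

lemma mu_lt_of_big {ε x c : ℝ} (hε : 0 < ε) (hx : 3 * ε ≤ x)
    (hc : 1/3 ≤ c) (hc2 : c ≤ 2/3) : mu ε (c * x) < mu ε x := by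
  rw [mu_big hε hx]
  set k := Nat.find (ex2 (x := x) hε) with hkdef
  have spec : x < (3/2) ^ k * (3 * ε) := Nat.find_spec (ex2 (x := x) hε)
  have hk1 : 1 ≤ k := by
    rcases Nat.eq_zero_or_pos k with h | h
    · rw [h] at spec; simp at spec; linarith
    · exact h
  have hxpos : 0 < x := by linarith
  have hcxe : ε ≤ c * x := by nlinarith
  have hns : ¬(0 < c * x ∧ c * x < ε) := by rintro ⟨_, h⟩; linarith
  by_cases hb : 3 * ε ≤ c * x
  · rw [mu_big hε hb]
    have hpow : (3/2:ℝ) ^ k = (3/2) ^ (k - 1) * (3/2) := by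
      rw [← pow_succ, Nat.sub_add_cancel hk1]
    have hpos : (0:ℝ) < (3/2:ℝ) ^ (k - 1) := by positivity
    have hfind : Nat.find (ex2 (x := c * x) hε) ≤ k - 1 := by
      apply Nat.find_le
      nlinarith [spec]
    omega
  · rw [mu_zero hns hb]
    omega

noncomputable def sol (ε : ℝ) (hε : 0 < ε) (y₀ : ℝ → ℝ) (x : ℝ) : ℝ :=
  if h0 : x ≤ 0 then 0
  else if h1 : x < ε then sol ε hε y₀ (3 * x) - sol ε hε y₀ (2 * x)
  else if h2 : x < 3 * ε then y₀ x
  else sol ε hε y₀ (x / 3) + sol ε hε y₀ (2 * x / 3)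
termination_by mu ε x
decreasing_by
  · exact mu_lt_of_small hε (lt_of_not_ge h0) h1 (by norm_num) le_rfl
  · exact mu_lt_of_small hε (lt_of_not_ge h0) h1 le_rfl (by norm_num)
  · rw [show x / 3 = (1/3) * x by ring]
    exact mu_lt_of_big hε (le_of_not_gt h2) le_rfl (by norm_num)
  · rw [show 2 * x / 3 = (2/3) * x by ring]
    exact mu_lt_of_big hε (le_of_not_gt h2) (by norm_num) le_rfl

lemma sol_nonpos {ε : ℝ} (hε : 0 < ε) (y₀ : ℝ → ℝ) {x : ℝ} (hx : x ≤ 0) :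
    sol ε hε y₀ x = 0 := by rw [sol, dif_pos hx]

lemma sol_small {ε : ℝ} (hε : 0 < ε) (y₀ : ℝ → ℝ) {x : ℝ} (hx : 0 < x) (hxe : x < ε) :
    sol ε hε y₀ x = sol ε hε y₀ (3 * x) - sol ε hε y₀ (2 * x) := by
  rw [sol, dif_neg (not_le.mpr hx), dif_pos hxe]

lemma sol_band {ε : ℝ} (hε : 0 < ε) (y₀ : ℝ → ℝ) {x : ℝ} (hx : ε ≤ x) (hxe : x < 3 * ε) :
    sol ε hε y₀ x = y₀ x := by
  rw [sol, dif_neg (by linarith), dif_neg (not_lt.mpr hx), dif_pos hxe]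

lemma sol_big {ε : ℝ} (hε : 0 < ε) (y₀ : ℝ → ℝ) {x : ℝ} (hx : 3 * ε ≤ x) :
    sol ε hε y₀ x = sol ε hε y₀ (x / 3) + sol ε hε y₀ (2 * x / 3) := by
  rw [sol, dif_neg (by nlinarith : ¬ x ≤ 0), dif_neg (by nlinarith : ¬ x < ε),
    dif_neg (not_lt.mpr hx)]

lemma sol_fe {ε : ℝ} (hε : 0 < ε) (y₀ : ℝ → ℝ) {x : ℝ} (hx : 0 ≤ x) :
    sol ε hε y₀ (3 * x) = sol ε hε y₀ x + sol ε hε y₀ (2 * x) := by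
  rcases eq_or_lt_of_le hx with h | hx0
  · rw [← h]
    norm_num [sol_nonpos hε y₀ le_rfl]
  rcases lt_or_ge x ε with h1 | h1
  · rw [sol_small hε y₀ hx0 h1]; ring
  · have h3 : 3 * ε ≤ 3 * x := by linarith
    rw [sol_big hε y₀ h3, show 3 * x / 3 = x by ring, show 2 * (3 * x) / 3 = 2 * x by ring]

/-- For `ε > 0` and any initial function `y₀`, there is a solution `y` of
`y(3x) = y(x) + y(2x)` (for all `x ≥ 0`) agreeing with `y₀` on `[ε, 3ε)`, and any two such
solutions agree on `[0, ∞)`. -/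
theorem stmt_18 (ε : ℝ) (hε : 0 < ε) :
    ∀ y₀ : ℝ → ℝ,
      (∃ y : ℝ → ℝ,
        (∀ x : ℝ, x ≥ 0 → y (3 * x) = y x + y (2 * x)) ∧
        (∀ x ∈ Set.Ico ε (3 * ε), y x = y₀ x)) ∧
      (∀ y z : ℝ → ℝ,
        ((∀ x : ℝ, x ≥ 0 → y (3 * x) = y x + y (2 * x)) ∧
          (∀ x ∈ Set.Ico ε (3 * ε), y x = y₀ x)) →
        ((∀ x : ℝ, x ≥ 0 → z (3 * x) = z x + z (2 * x)) ∧
          (∀ x ∈ Set.Ico ε (3 * ε), z x = y₀ x)) →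
        ∀ x ∈ Set.Ici (0 : ℝ), y x = z x) := by
  intro y₀
  constructor
  · exact ⟨sol ε hε y₀, fun x hx => sol_fe hε y₀ hx,
      fun x hx => sol_band hε y₀ hx.1 hx.2⟩
  · intro y z hy hz x hx
    simp only [Set.mem_Ici] at hx
    have key : ∀ n : ℕ, ∀ x : ℝ, 0 ≤ x → mu ε x = n → y x = z x := by
      intro n
      induction n using Nat.strong_induction_on with
      | _ n ih =>
        intro x hx hmu
        rcases eq_or_lt_of_le hx with h | hx0
        · -- x = 0 : y 0 = 0 = z 0
          have hy0 := hy.1 0 le_rfl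
          have hz0 := hz.1 0 le_rfl
          norm_num at hy0 hz0
          rw [← h]; rw [hy0, hz0]
        rcases lt_or_ge x ε with h1 | h1
        · -- small
          have e1 := hy.1 x (le_of_lt hx0)
          have e2 := hz.1 x (le_of_lt hx0)
          have i2 : y (2 * x) = z (2 * x) :=
            ih _ (hmu ▸ mu_lt_of_small hε hx0 h1 le_rfl (by norm_num)) _ (by linarith) rfl
          have i3 : y (3 * x) = z (3 * x) :=
            ih _ (hmu ▸ mu_lt_of_small hε hx0 h1 (by norm_num) le_rfl) _ (by linarith) rfl
          linarith
        rcases lt_or_ge x (3 * ε) with h2 | h2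
        · rw [hy.2 x ⟨h1, h2⟩, hz.2 x ⟨h1, h2⟩]
        · -- big
          have e1 := hy.1 (x / 3) (by linarith)
          have e2 := hz.1 (x / 3) (by linarith)
          rw [show 3 * (x / 3) = x by ring, show 2 * (x / 3) = 2 * x / 3 by ring] at e1 e2
          have l1 : mu ε (x / 3) < n := by
            rw [← hmu, show x / 3 = (1/3) * x by ring]
            exact mu_lt_of_big hε h2 le_rfl (by norm_num)
          have l2 : mu ε (2 * x / 3) < n := by
            rw [← hmu, show 2 * x / 3 = (2/3) * x by ring]
            exact mu_lt_of_big hε h2 (by norm_num) le_rfl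
          have i1 : y (x / 3) = z (x / 3) := ih _ l1 _ (by linarith) rfl
          have i2 : y (2 * x / 3) = z (2 * x / 3) := ih _ l2 _ (by linarith) rfl
          linarith
    exact key (mu ε x) x hx rfl
end

section
/- Let b ∈ ℝ with b ≠ 0, b ≠ 1, b ≠ -1, and set c = b/(b-1). Suppose y : ℝ → ℝ satisfies y(x+1) = y(bx) for all x ∈ ℝ. Then for every x ∈ ℝ and every n ∈ ℕ one has y(bⁿ(x - c) + c) = y(x) and y(b⁻ⁿ(x - c) + c) = y(x). Moreover, for every x ≠ c: if |b| < 1 the points bⁿ(x - c) + c, n ∈ ℕ, are pairwise distinct and converge to c as n → ∞, while if |b| > 1 the points b⁻ⁿ(x - c) + c, n ∈ ℕ, are pairwise distinct and converge to c as n → ∞. -/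
lemma aux_inj_tendsto (r x c : ℝ) (hr0 : r ≠ 0) (hr : |r| < 1) (hx : x - c ≠ 0) :
    Function.Injective (fun n : ℕ => r ^ n * (x - c) + c) ∧
    Filter.Tendsto (fun n : ℕ => r ^ n * (x - c) + c) Filter.atTop (nhds c) := by
  constructor
  · intro m n h
    simp only [add_left_inj] at h
    have h2 : r ^ m = r ^ n := mul_right_cancel₀ hx h
    have h3 : |r| ^ m = |r| ^ n := by rw [← abs_pow, ← abs_pow, h2]
    have habs : 0 < |r| := abs_pos.mpr hr0
    have : StrictAnti ((|r|) ^ ·) := pow_right_strictAnti₀ habs hr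
    exact this.injective h3
  · have h0 : Filter.Tendsto (fun n : ℕ => r ^ n) Filter.atTop (nhds 0) :=
      tendsto_pow_atTop_nhds_zero_of_abs_lt_one hr
    have := (h0.mul_const (x - c)).add_const c
    simpa using this

/-- For `b ∉ {0, 1, -1}` and `c = b/(b-1)`, any solution `y` of
`y(x+1) = y(bx)` satisfies `y(bⁿ(x-c)+c) = y x` and `y(b⁻ⁿ(x-c)+c) = y x` for all `x` and
`n ∈ ℕ`; moreover, for `x ≠ c`, if `|b| < 1` the points `bⁿ(x-c)+c` are pairwise distinct
and converge to `c`, and if `|b| > 1` the points `b⁻ⁿ(x-c)+c` are pairwise distinct and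
converge to `c`. -/
theorem stmt_19 (b : ℝ) (hb0 : b ≠ 0) (hb1 : b ≠ 1) (hbm1 : b ≠ -1)
    (c : ℝ) (hc : c = b / (b - 1))
    (y : ℝ → ℝ) (hy : ∀ x : ℝ, y (x + 1) = y (b * x)) :
    (∀ x : ℝ, ∀ n : ℕ, y (b ^ n * (x - c) + c) = y x) ∧
    (∀ x : ℝ, ∀ n : ℕ, y (b ^ (-(n : ℤ)) * (x - c) + c) = y x) ∧
    (∀ x : ℝ, x ≠ c →
      (|b| < 1 →
        Function.Injective (fun n : ℕ => b ^ n * (x - c) + c) ∧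
        Filter.Tendsto (fun n : ℕ => b ^ n * (x - c) + c) Filter.atTop (nhds c)) ∧
      (|b| > 1 →
        Function.Injective (fun n : ℕ => b ^ (-(n : ℤ)) * (x - c) + c) ∧
        Filter.Tendsto (fun n : ℕ => b ^ (-(n : ℤ)) * (x - c) + c) Filter.atTop (nhds c))) := by
  have hb1' : b - 1 ≠ 0 := sub_ne_zero.mpr hb1
  have hcb : c * (b - 1) = b := by rw [hc]; field_simp
  have step : ∀ u : ℝ, y u = y (b * (u - c) + c) := by
    intro u
    have h1 := hy (u - 1)
    have h2 : b * (u - 1) = b * (u - c) + c := by nlinarith [hcb]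
    rw [← h2]
    simpa using h1
  have fwd : ∀ x : ℝ, ∀ n : ℕ, y (b ^ n * (x - c) + c) = y x := by
    intro x n
    induction n with
    | zero => simp
    | succ n ih =>
      have := step (b ^ n * (x - c) + c)
      rw [← ih, this]
      ring_nf
  have hpow : ∀ n : ℕ, (b : ℝ) ^ n * b ^ (-(n : ℤ)) = 1 := by
    intro n
    rw [← zpow_natCast b n, ← zpow_add₀ hb0]
    simp
  have bwd : ∀ x : ℝ, ∀ n : ℕ, y (b ^ (-(n : ℤ)) * (x - c) + c) = y x := by
    intro x n
    have h := fwd (b ^ (-(n : ℤ)) * (x - c) + c) n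
    have h2 : b ^ n * (b ^ (-(n : ℤ)) * (x - c) + c - c) + c = x := by
      have := hpow n
      have : b ^ n * (b ^ (-(n : ℤ)) * (x - c)) = x - c := by
        rw [← mul_assoc, hpow n]; ring
      rw [add_sub_cancel_right, this]; ring
    rw [h2] at h
    exact h.symm
  refine ⟨fwd, bwd, ?_⟩
  intro x hx
  have hxc : x - c ≠ 0 := sub_ne_zero.mpr hx
  constructor
  · intro hblt
    exact aux_inj_tendsto b x c hb0 hblt hxc
  · intro hbgt
    have hinv : |b⁻¹| < 1 := by
      rw [abs_inv]
      rw [inv_lt_one_iff₀]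
      right; exact hbgt
    have heq : (fun n : ℕ => b ^ (-(n : ℤ)) * (x - c) + c)
        = fun n : ℕ => (b⁻¹) ^ n * (x - c) + c := by
      funext n
      rw [zpow_neg, zpow_natCast, inv_pow]
    rw [heq]
    exact aux_inj_tendsto b⁻¹ x c (inv_ne_zero hb0) hinv hxc
end
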